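/- arXiv:0709.2340 — 2 statements merged into one kernel-verified Lean document; each statement's English description precedes it below -/
import Mathlib

section
/- Let {W_i}_{i=1}^N be a tight fusion frame for ℝ^M with Σ_{ℓ=1}^N P_ℓ = A·I in which every subspace has dimension m and all pairwise chordal distances are equal to a common value d_c, and let σ_x, σ_n > 0. Then for any erasure set S ⊆ {1,…,N} with |S| = k, the extra MSE of the no-erasure LMMSE estimator equals α² (σ_x² + σ_n²) k m + α² σ_x² k (k−1) (m − d_c²), where α = σ_x²/(A σ_x² + σ_n²). In particular, for fixed m and k it is a strictly decreasing function of d_c. -/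
open Matrix BigOperators

/-- The Frobenius norm of a real square matrix. -/
noncomputable def frobeniusNorm {M : ℕ} (X : Matrix (Fin M) (Fin M) ℝ) : ℝ :=
  Real.sqrt (Matrix.trace (Xᵀ * X))

/-- The chordal distance between two subspaces of `ℝ^M`, expressed in terms of their
orthogonal projection matrices: `d_c = (1/√2) ‖Q_V − Q_W‖_F`. -/
noncomputable def chordalDist {M : ℕ} (Q₁ Q₂ : Matrix (Fin M) (Fin M) ℝ) : ℝ :=
  (1 / Real.sqrt 2) * frobeniusNorm (Q₁ - Q₂)

/-- Trace of a symmetric idempotent matrix equals the finrank of its range. -/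
lemma trace_proj {M : ℕ} (P : Matrix (Fin M) (Fin M) ℝ) (h2 : P * P = P)
    (W : Submodule ℝ (Fin M → ℝ)) (hr : LinearMap.range P.mulVecLin = W) :
    Matrix.trace P = (Module.finrank ℝ W : ℝ) := by
  have hff : P.mulVecLin ∘ₗ P.mulVecLin = P.mulVecLin := by
    rw [← Matrix.mulVecLin_mul, h2]
  have hproj : LinearMap.IsProj W P.mulVecLin := by
    constructor
    · intro x
      rw [← hr]; exact LinearMap.mem_range_self _ x
    · intro x hx
      rw [← hr] at hx
      obtain ⟨y, rfl⟩ := hx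
      exact congrFun (congrArg (fun f => f.toFun) hff) y
  have := hproj.trace
  rw [LinearMap.trace_eq_matrix_trace ℝ (Pi.basisFun ℝ (Fin M)),
    LinearMap.toMatrix_eq_toMatrix', ← Matrix.toLin'_apply',
    LinearMap.toMatrix'_toLin'] at this
  exact this

lemma chordal_sq {M : ℕ} (P Q : Matrix (Fin M) (Fin M) ℝ)
    (hP : P.IsSymm) (hQ : Q.IsSymm) (hP2 : P * P = P) (hQ2 : Q * Q = Q) (m : ℝ)
    (hPt : Matrix.trace P = m) (hQt : Matrix.trace Q = m) :
    (chordalDist P Q) ^ 2 = m - Matrix.trace (P * Q) := by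
  have hnn : 0 ≤ Matrix.trace ((P - Q)ᵀ * (P - Q)) := by
    rw [Matrix.trace]
    refine Finset.sum_nonneg fun i _ => ?_
    simp only [Matrix.diag_apply, Matrix.mul_apply, Matrix.transpose_apply]
    exact Finset.sum_nonneg fun j _ => mul_self_nonneg _
  have h2 : (0:ℝ) < 2 := by norm_num
  have : (chordalDist P Q) ^ 2 = Matrix.trace ((P - Q)ᵀ * (P - Q)) / 2 := by
    rw [chordalDist, frobeniusNorm, mul_pow, Real.sq_sqrt hnn, div_pow, one_pow,
      Real.sq_sqrt (le_of_lt h2)]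
    ring
  rw [this]
  have hexp : (P - Q)ᵀ * (P - Q) = P * P - P * Q - Q * P + Q * Q := by
    rw [Matrix.transpose_sub, hP.eq, hQ.eq]
    noncomm_ring
  rw [hexp]
  simp only [Matrix.trace_add, Matrix.trace_sub]
  rw [Matrix.trace_mul_comm Q P, hP2, hQ2, hPt, hQt]
  ring

/-- For a tight fusion frame `∑ₗ Pₗ = A • I` of `m`-dimensional
subspaces whose pairwise chordal distances are all equal to `d_c`, and `σₓ, σₙ > 0`:
for any erasure set `S` with `|S| = k`, the extra MSE of the no-erasure LMMSE estimator
equals `α²(σₓ²+σₙ²)km + α²σₓ²k(k−1)(m − d_c²)`, where `α = σₓ²/(Aσₓ²+σₙ²)`.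
In particular, for fixed `m` and `k ≥ 2` it is a strictly decreasing function
of `d_c`. -/
theorem k_erasure_mse {M N : ℕ} (A : ℝ) (hA : 0 < A)
    (σx σn : ℝ) (hσx : 0 < σx) (hσn : 0 < σn)
    (W : Fin N → Submodule ℝ (Fin M → ℝ))
    (P : Fin N → Matrix (Fin M) (Fin M) ℝ)
    (hP : ∀ i, (P i).IsSymm ∧ P i * P i = P i ∧
      LinearMap.range (P i).mulVecLin = W i)
    (htight : ∑ ℓ, P ℓ = A • (1 : Matrix (Fin M) (Fin M) ℝ))
    (m : ℕ) (hdim : ∀ i, Module.finrank ℝ (W i) = m)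
    (dc : ℝ) (hdc : ∀ i j, i ≠ j → chordalDist (P i) (P j) = dc)
    (S : Finset (Fin N))
    (α : ℝ) (hα : α = σx ^ 2 / (A * σx ^ 2 + σn ^ 2)) :
    α ^ 2 * Matrix.trace
        (σx ^ 2 • ((∑ i ∈ S, P i) * (∑ i ∈ S, P i)) + σn ^ 2 • ∑ i ∈ S, P i) =
      α ^ 2 * (σx ^ 2 + σn ^ 2) * (S.card : ℝ) * (m : ℝ) +
        α ^ 2 * σx ^ 2 * (S.card : ℝ) * ((S.card : ℝ) - 1) * ((m : ℝ) - dc ^ 2) ∧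
    (2 ≤ S.card →
      StrictAntiOn
        (fun d : ℝ => α ^ 2 * (σx ^ 2 + σn ^ 2) * (S.card : ℝ) * (m : ℝ) +
          α ^ 2 * σx ^ 2 * (S.card : ℝ) * ((S.card : ℝ) - 1) * ((m : ℝ) - d ^ 2))
        (Set.Ici 0)) := by
  
  have htr : ∀ i, Matrix.trace (P i) = (m : ℝ) := fun i => by
    rw [trace_proj (P i) (hP i).2.1 (W i) (hP i).2.2, hdim i]
  have htr2 : ∀ i j, i ≠ j → Matrix.trace (P i * P j) = (m : ℝ) - dc ^ 2 := by
    intro i j hij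
    have h := chordal_sq (P i) (P j) (hP i).1 (hP j).1 (hP i).2.1 (hP j).2.1
      (m : ℝ) (htr i) (htr j)
    rw [hdc i j hij] at h
    linarith
  have hαpos : 0 < α := by rw [hα]; positivity
  constructor
  · rw [Matrix.trace_add, Matrix.trace_smul, Matrix.trace_smul, smul_eq_mul, smul_eq_mul]
    have hT1 : Matrix.trace (∑ i ∈ S, P i) = (S.card : ℝ) * m := by
      rw [Matrix.trace_sum, Finset.sum_congr rfl (fun i _ => htr i),
        Finset.sum_const, nsmul_eq_mul]
    have hT2 : Matrix.trace ((∑ i ∈ S, P i) * (∑ i ∈ S, P i)) =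
        (S.card : ℝ) * ((m : ℝ) + ((S.card : ℝ) - 1) * ((m : ℝ) - dc ^ 2)) := by
      rw [Finset.sum_mul_sum, Matrix.trace_sum]
      have hin : ∀ i ∈ S, Matrix.trace (∑ j ∈ S, P i * P j)
          = (m : ℝ) + ((S.card : ℝ) - 1) * ((m : ℝ) - dc ^ 2) := by
        intro i hi
        rw [Matrix.trace_sum, ← Finset.add_sum_erase _ _ hi, (hP i).2.1, htr i]
        congr 1
        rw [Finset.sum_congr rfl (fun j hj => htr2 i j
          (Ne.symm (Finset.mem_erase.mp hj).1)), Finset.sum_const,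
          Finset.card_erase_of_mem hi, nsmul_eq_mul]
        congr 1
        have : 1 ≤ S.card := Finset.card_pos.mpr ⟨i, hi⟩
        push_cast [Nat.cast_sub this]
        ring
      rw [Finset.sum_congr rfl hin, Finset.sum_const, nsmul_eq_mul]
    rw [hT1, hT2]
    ring
  · intro hk
    have hC : 0 < α ^ 2 * σx ^ 2 * (S.card : ℝ) * ((S.card : ℝ) - 1) := by
      have h2 : (2 : ℝ) ≤ (S.card : ℝ) := by exact_mod_cast hk
      have : (0:ℝ) < (S.card : ℝ) - 1 := by linarith
      positivity
    intro a ha b hb hab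
    simp only [Set.mem_Ici] at ha hb
    have hsq : a ^ 2 < b ^ 2 := by nlinarith
    dsimp only
    nlinarith [mul_lt_mul_of_pos_left hsq hC]
end

section
/- Let N ≥ 2 and let {W_i}_{i=1}^N be a tight fusion frame for ℝ^M consisting of m-dimensional subspaces with all pairwise chordal distances equal to a common value d_c (an equi-distance tight fusion frame). Then {W_i}_{i=1}^N is an optimal Grassmannian packing: for every family {V_i}_{i=1}^N of m-dimensional subspaces of ℝ^M, min_{i≠j} d_c(V_i, V_j) ≤ min_{i≠j} d_c(W_i, W_j) = d_c. -/
open Matrix BigOperators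

lemma trace_transpose_mul_self {M : ℕ} (X : Matrix (Fin M) (Fin M) ℝ) :
    (Xᵀ * X).trace = ∑ i, ∑ j, (X j i)^2 := by
  simp [Matrix.trace, Matrix.diag, Matrix.mul_apply, sq]

lemma trace_transpose_mul_self_nonneg {M : ℕ} (X : Matrix (Fin M) (Fin M) ℝ) :
    0 ≤ (Xᵀ * X).trace := by
  rw [trace_transpose_mul_self]; positivity

lemma frobeniusNorm_sq {M : ℕ} (X : Matrix (Fin M) (Fin M) ℝ) :
    frobeniusNorm X ^ 2 = (Xᵀ * X).trace :=
  Real.sq_sqrt (trace_transpose_mul_self_nonneg X)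

lemma chordalDist_nonneg {M : ℕ} (Q₁ Q₂ : Matrix (Fin M) (Fin M) ℝ) :
    0 ≤ chordalDist Q₁ Q₂ :=
  mul_nonneg (by positivity) (Real.sqrt_nonneg _)

lemma chordalDist_sq {M : ℕ} (Q₁ Q₂ : Matrix (Fin M) (Fin M) ℝ)
    (h₁s : Q₁.IsSymm) (h₂s : Q₂.IsSymm) (h₁ : Q₁ * Q₁ = Q₁) (h₂ : Q₂ * Q₂ = Q₂) :
    chordalDist Q₁ Q₂ ^ 2 = (Q₁.trace + Q₂.trace) / 2 - (Q₁ * Q₂).trace := by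
  have h2 : (0:ℝ) ≤ 2 := by norm_num
  have hsq : (1 / Real.sqrt 2) ^ 2 = 1 / 2 := by
    rw [div_pow, one_pow, Real.sq_sqrt h2]
  rw [chordalDist, mul_pow, hsq, frobeniusNorm_sq, Matrix.transpose_sub, h₁s.eq, h₂s.eq,
    sub_mul, mul_sub, mul_sub, h₁, h₂]
  have hcomm : (Q₂ * Q₁).trace = (Q₁ * Q₂).trace := Matrix.trace_mul_comm Q₂ Q₁
  simp only [Matrix.trace_sub]
  rw [hcomm]; ring

lemma trace_idem_eq_finrank {M : ℕ} (X : Matrix (Fin M) (Fin M) ℝ) (h : X * X = X) :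
    X.trace = (Module.finrank ℝ (LinearMap.range X.mulVecLin) : ℝ) := by
  have hproj : LinearMap.IsProj (LinearMap.range X.mulVecLin) X.mulVecLin := by
    constructor
    · intro x; exact LinearMap.mem_range_self _ x
    · rintro x ⟨y, rfl⟩
      have : X.mulVecLin ∘ₗ X.mulVecLin = X.mulVecLin := by
        rw [← Matrix.mulVecLin_mul, h]
      exact congrFun (congrArg (fun f => f.toFun) this) y
  have htr := hproj.trace
  rw [← htr, LinearMap.trace_eq_matrix_trace ℝ (Pi.basisFun ℝ (Fin M))]
  congr 1
  rw [LinearMap.toMatrix_eq_toMatrix', ← Matrix.toLin'_apply' X, LinearMap.toMatrix'_toLin']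

lemma double_sum_split {N : ℕ} (t : Fin N → Fin N → ℝ) :
    ∑ i, ∑ j, t i j = ∑ i, t i i + ∑ p ∈ (Finset.univ (α := Fin N)).offDiag, t p.1 p.2 := by
  rw [← Finset.sum_product', ← Finset.diag_union_offDiag,
    Finset.sum_union (Finset.disjoint_diag_offDiag _), Finset.sum_diag]

/-- Let `N ≥ 2` and let `{W i}` be an equi-distance tight fusion frame
for `ℝ^M`: a tight fusion frame of `m`-dimensional subspaces with all pairwise chordal
distances equal to `d_c`.  Then `{W i}` is an optimal Grassmannian packing: for every
family `{V i}` of `m`-dimensional subspaces of `ℝ^M`, the minimum pairwise chordal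
distance of `{V i}` is at most `d_c`, which is the minimum pairwise chordal distance of
`{W i}`. -/
theorem equidistance_tight_is_optimal_packing {M N : ℕ} (hN : 2 ≤ N) (hM : 0 < M)
    (A : ℝ) (hA : 0 < A)
    (W : Fin N → Submodule ℝ (Fin M → ℝ))
    (P : Fin N → Matrix (Fin M) (Fin M) ℝ)
    (hP : ∀ i, (P i).IsSymm ∧ P i * P i = P i ∧
      LinearMap.range (P i).mulVecLin = W i)
    (htight : ∑ i, P i = A • (1 : Matrix (Fin M) (Fin M) ℝ))
    (m : ℕ) (hdim : ∀ i, Module.finrank ℝ (W i) = m)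
    (dc : ℝ) (hdc : ∀ i j, i ≠ j → chordalDist (P i) (P j) = dc) :
    ∀ (V : Fin N → Submodule ℝ (Fin M → ℝ)) (Q : Fin N → Matrix (Fin M) (Fin M) ℝ),
      (∀ i, (Q i).IsSymm ∧ Q i * Q i = Q i ∧
        LinearMap.range (Q i).mulVecLin = V i) →
      (∀ i, Module.finrank ℝ (V i) = m) →
      ∃ i j, i ≠ j ∧ chordalDist (Q i) (Q j) ≤ dc := by
  intro V Q hQ hdimV
  -- traces of the projections
  have hPtr : ∀ i, (P i).trace = (m : ℝ) := fun i => by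
    rw [trace_idem_eq_finrank _ (hP i).2.1, (hP i).2.2, hdim i]
  have hQtr : ∀ i, (Q i).trace = (m : ℝ) := fun i => by
    rw [trace_idem_eq_finrank _ (hQ i).2.1, (hQ i).2.2, hdimV i]
  -- trace of tightness: N m = A M
  have hNm : (N : ℝ) * m = A * M := by
    have h := congrArg Matrix.trace htight
    rw [Matrix.trace_sum, Matrix.trace_smul, Matrix.trace_one] at h
    simpa [hPtr, Finset.sum_const, Finset.card_univ, smul_eq_mul] using h
  -- off-diagonal traces for P
  have hoffP : ∀ i j, i ≠ j → ((P i) * (P j)).trace = (m : ℝ) - dc ^ 2 := by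
    intro i j hij
    have h := chordalDist_sq (P i) (P j) (hP i).1 (hP j).1 (hP i).2.1 (hP j).2.1
    rw [hdc i j hij, hPtr i, hPtr j] at h
    linarith
  -- the double trace sum for P
  have hPdouble : ∑ i, ∑ j, ((P i) * (P j)).trace = A ^ 2 * M := by
    have h1 : ((∑ i, P i) * (∑ j, P j)).trace = ∑ i, ∑ j, ((P i) * (P j)).trace := by
      rw [Finset.sum_mul, Matrix.trace_sum]
      exact Finset.sum_congr rfl fun i _ => by rw [Finset.mul_sum, Matrix.trace_sum]
    rw [← h1, htight, Matrix.smul_mul, Matrix.mul_smul, smul_smul, Matrix.one_mul,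
      Matrix.trace_smul, Matrix.trace_one, smul_eq_mul]
    rw [Fintype.card_fin]
    ring
  have hcardOff : ((Finset.univ (α := Fin N)).offDiag.card : ℝ) = (N : ℝ) ^ 2 - N := by
    rw [Finset.offDiag_card, Finset.card_univ, Fintype.card_fin]
    have hle : N ≤ N * N := Nat.le_mul_of_pos_left N (by omega)
    push_cast [Nat.cast_sub hle]
    ring
  -- simplex identity: A² M = N m + (N² - N)(m - dc²)
  have hsimplex : A ^ 2 * M = (N : ℝ) * m + ((N : ℝ) ^ 2 - N) * ((m : ℝ) - dc ^ 2) := by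
    rw [← hPdouble, double_sum_split]
    congr 1
    · calc ∑ i, ((P i) * (P i)).trace = ∑ _i : Fin N, (m : ℝ) :=
            Finset.sum_congr rfl fun i _ => by rw [(hP i).2.1, hPtr i]
        _ = (N : ℝ) * m := by
            rw [Finset.sum_const, Finset.card_univ, Fintype.card_fin, nsmul_eq_mul]
    · rw [Finset.sum_congr rfl (fun p hp => hoffP p.1 p.2 (Finset.mem_offDiag.mp hp).2.2),
        Finset.sum_const, nsmul_eq_mul, hcardOff]
  -- Cauchy-Schwarz for S = ∑ Q i
  set S : Matrix (Fin M) (Fin M) ℝ := ∑ i, Q i with hS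
  have hStr : S.trace = (N : ℝ) * m := by
    rw [hS, Matrix.trace_sum]
    calc ∑ i, (Q i).trace = ∑ _i : Fin N, (m : ℝ) := Finset.sum_congr rfl fun i _ => hQtr i
      _ = (N : ℝ) * m := by simp [mul_comm]
  have hSsymm : Sᵀ = S := by
    rw [hS, Matrix.transpose_sum]
    exact Finset.sum_congr rfl fun i _ => (hQ i).1.eq
  have hCS : S.trace ^ 2 ≤ (M : ℝ) * (S * S).trace := by
    have h1 : (Sᵀ * S).trace = ∑ i, ∑ j, (S j i) ^ 2 := trace_transpose_mul_self S
    have h2 : S.trace = ∑ i, S i i := by simp [Matrix.trace, Matrix.diag]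
    have h3 : (∑ i, S i i) ^ 2 ≤ ((Finset.univ (α := Fin M)).card : ℝ) * ∑ i, (S i i) ^ 2 :=
      sq_sum_le_card_mul_sum_sq
    have h4 : ∑ i, (S i i) ^ 2 ≤ ∑ i, ∑ j, (S j i) ^ 2 := by
      apply Finset.sum_le_sum
      intro i _
      exact Finset.single_le_sum (f := fun j => (S j i) ^ 2)
        (fun j _ => sq_nonneg _) (Finset.mem_univ i)
    have h1' : (S * S).trace = ∑ i, ∑ j, (S j i) ^ 2 := by rw [← h1, hSsymm]
    rw [h2, h1']
    calc (∑ i, S i i) ^ 2 ≤ ((Finset.univ (α := Fin M)).card : ℝ) * ∑ i, (S i i) ^ 2 := h3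
      _ ≤ (M : ℝ) * ∑ i, ∑ j, (S j i) ^ 2 := by
          rw [Finset.card_univ, Fintype.card_fin]
          exact mul_le_mul_of_nonneg_left h4 (Nat.cast_nonneg M)
  have hSS : (S * S).trace = ∑ i, ∑ j, ((Q i) * (Q j)).trace := by
    rw [hS, Finset.sum_mul, Matrix.trace_sum]
    exact Finset.sum_congr rfl fun i _ => by rw [Finset.mul_sum, Matrix.trace_sum]
  -- lower bound for ∑∑ tr(Q i Q j)
  have hMpos : (0 : ℝ) < M := by exact_mod_cast hM
  have hQdouble : A ^ 2 * M ≤ ∑ i, ∑ j, ((Q i) * (Q j)).trace := by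
    have := hCS
    rw [hStr, hNm, hSS] at this
    have h5 : (A * M) ^ 2 = (M : ℝ) * (A ^ 2 * M) := by ring
    rw [h5] at this
    exact le_of_mul_le_mul_left this hMpos
  -- off-diagonal lower bound for Q
  have hQoff : ((N : ℝ) ^ 2 - N) * ((m : ℝ) - dc ^ 2) ≤
      ∑ p ∈ (Finset.univ (α := Fin N)).offDiag, ((Q p.1) * (Q p.2)).trace := by
    have hsplit := double_sum_split (fun i j => ((Q i) * (Q j)).trace)
    have hdiagQ : ∑ i, ((Q i) * (Q i)).trace = (N : ℝ) * m := by
      have : ∀ i : Fin N, ((Q i) * (Q i)).trace = (m : ℝ) := fun i => by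
        rw [(hQ i).2.1, hQtr i]
      simp [this, Finset.sum_const, Finset.card_univ, mul_comm]
    have := hQdouble
    rw [hsplit, hdiagQ] at this
    linarith [hsimplex]
  -- dc is nonnegative
  have h01 : (⟨0, by omega⟩ : Fin N) ≠ (⟨1, by omega⟩ : Fin N) := by
    intro h; simp [Fin.ext_iff] at h
  have hdcnn : 0 ≤ dc := by
    rw [← hdc _ _ h01]; exact chordalDist_nonneg _ _
  -- conclude by contradiction
  by_contra hcon
  push_neg at hcon
  have hoffNe : ((Finset.univ (α := Fin N)).offDiag).Nonempty :=
    ⟨(⟨0, by omega⟩, ⟨1, by omega⟩), Finset.mem_offDiag.mpr ⟨Finset.mem_univ _, Finset.mem_univ _, h01⟩⟩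
  have hstrict : ∑ p ∈ (Finset.univ (α := Fin N)).offDiag, ((Q p.1) * (Q p.2)).trace <
      ∑ p ∈ (Finset.univ (α := Fin N)).offDiag, ((m : ℝ) - dc ^ 2) := by
    apply Finset.sum_lt_sum_of_nonempty hoffNe
    intro p hp
    obtain ⟨-, -, hne⟩ := Finset.mem_offDiag.mp hp
    have hgt : dc < chordalDist (Q p.1) (Q p.2) := hcon p.1 p.2 hne
    have hsq : dc ^ 2 < chordalDist (Q p.1) (Q p.2) ^ 2 := by
      apply pow_lt_pow_left₀ hgt hdcnn
      norm_num
    have h := chordalDist_sq (Q p.1) (Q p.2) (hQ p.1).1 (hQ p.2).1 (hQ p.1).2.1 (hQ p.2).2.1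
    rw [hQtr p.1, hQtr p.2] at h
    linarith
  rw [Finset.sum_const, nsmul_eq_mul, hcardOff] at hstrict
  linarith
end
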